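/- Let β > 0, ω ≥ 0 and set γ = 1. For integers r ≥ 0 define P_r^{drop} = Σ_{i=0}^{r} C(r,i) (ω/(β+ω))^{r−i} (β/(β+ω))^{i} · 1/(1 + i(β+ω)) and P_r^{mod} = (1+ω)/(1+ω+rβ). Then P_r^{drop} ≤ P_r^{mod} for all r ≥ 0, with equality for r = 0 and r = 1, and strict inequality for r ≥ 2 when ω > 0. -/

import Mathlib

open Finset

noncomputable def Bw (p q : ℝ) (m : ℕ) (f : ℕ → ℝ) : ℝ :=
  ∑ i ∈ range (m + 1), (m.choose i : ℝ) * q ^ (m - i) * p ^ i * f i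

lemma Bw_one (p q : ℝ) (hpq : p + q = 1) (m : ℕ) : Bw p q m (fun _ => 1) = 1 := by
  have h := add_pow p q m
  rw [hpq, one_pow] at h
  rw [Bw]
  exact (Finset.sum_congr rfl fun i hi => by ring).trans h.symm

lemma Bw_lin (p q c₁ c₂ : ℝ) (m : ℕ) (f g : ℕ → ℝ) :
    Bw p q m (fun i => c₁ * f i + c₂ * g i)
      = c₁ * Bw p q m f + c₂ * Bw p q m g := by
  simp only [Bw, Finset.mul_sum, ← Finset.sum_add_distrib]
  exact Finset.sum_congr rfl fun i _ => by ring

lemma Bw_congr (p q : ℝ) (m : ℕ) (f g : ℕ → ℝ) (h : ∀ i, f i = g i) :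
    Bw p q m f = Bw p q m g := by
  simp only [Bw]
  exact Finset.sum_congr rfl fun i _ => by rw [h i]

lemma Bw_succ (p q : ℝ) (m : ℕ) (f : ℕ → ℝ) :
    Bw p q (m + 1) f = q * Bw p q m f + p * Bw p q m (fun i => f (i + 1)) := by
  unfold Bw
  rw [Finset.sum_range_succ'
    (fun i => (((m + 1).choose i : ℝ)) * q ^ (m + 1 - i) * p ^ i * f i) (m + 1)]
  have h1 : ∀ i ∈ range (m + 1),
      (((m + 1).choose (i + 1) : ℝ)) * q ^ (m + 1 - (i + 1)) * p ^ (i + 1) * f (i + 1)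
      = ((m.choose i : ℝ)) * q ^ (m - i) * p ^ (i + 1) * f (i + 1)
        + ((m.choose (i + 1) : ℝ)) * q ^ (m - i) * p ^ (i + 1) * f (i + 1) := by
    intro i _
    rw [Nat.choose_succ_succ, Nat.succ_sub_succ]
    push_cast
    ring
  rw [Finset.sum_congr rfl h1, Finset.sum_add_distrib]
  have h2 : ∑ i ∈ range (m + 1), ((m.choose (i + 1) : ℝ)) * q ^ (m - i) * p ^ (i + 1) * f (i + 1)
      = ∑ i ∈ range m, ((m.choose (i + 1) : ℝ)) * q ^ (m - i) * p ^ (i + 1) * f (i + 1) := by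
    rw [Finset.sum_range_succ]
    simp
  have h3 : ∀ i ∈ range m,
      ((m.choose (i + 1) : ℝ)) * q ^ (m - i) * p ^ (i + 1) * f (i + 1)
      = q * (((m.choose (i + 1) : ℝ)) * q ^ (m - (i + 1)) * p ^ (i + 1) * f (i + 1)) := by
    intro i hi
    have hmi : m - i = (m - (i + 1)) + 1 := by
      have := Finset.mem_range.mp hi; omega
    rw [hmi, pow_succ]
    ring
  rw [h2, Finset.sum_congr rfl h3]
  have h4 : ∑ i ∈ range (m + 1), ((m.choose i : ℝ)) * q ^ (m - i) * p ^ (i + 1) * f (i + 1)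
      = p * ∑ i ∈ range (m + 1), ((m.choose i : ℝ)) * q ^ (m - i) * p ^ i * f (i + 1) := by
    rw [Finset.mul_sum]
    exact Finset.sum_congr rfl fun i _ => by ring
  rw [h4]
  have h5 : q * ∑ i ∈ range (m + 1), ((m.choose i : ℝ)) * q ^ (m - i) * p ^ i * f i
      = (∑ i ∈ range m, q * (((m.choose (i + 1) : ℝ)) * q ^ (m - (i + 1)) * p ^ (i + 1) * f (i + 1)))
        + q * (((m.choose 0 : ℝ)) * q ^ (m - 0) * p ^ 0 * f 0) := by
    rw [Finset.mul_sum, Finset.sum_range_succ'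
      (fun i => q * (((m.choose i : ℝ)) * q ^ (m - i) * p ^ i * f i)) m]
  rw [h5]
  simp only [Nat.choose_zero_right, Nat.cast_one, Nat.sub_zero, pow_zero, one_mul, mul_one]
  ring

lemma Bw_moment (p q : ℝ) (m : ℕ) (f : ℕ → ℝ) :
    Bw p q (m + 1) (fun i => (i : ℝ) * f i)
      = ((m : ℝ) + 1) * p * Bw p q m (fun i => f (i + 1)) := by
  unfold Bw
  rw [Finset.sum_range_succ'
    (fun i => (((m + 1).choose i : ℝ)) * q ^ (m + 1 - i) * p ^ i * ((i : ℝ) * f i)) (m + 1)]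
  simp only [Nat.cast_zero, zero_mul, mul_zero, add_zero]
  rw [Finset.mul_sum]
  refine Finset.sum_congr rfl fun i _ => ?_
  have hc : (((m + 1).choose (i + 1) : ℝ)) * ((i : ℝ) + 1) = ((m : ℝ) + 1) * (m.choose i : ℝ) := by
    have h := Nat.add_one_mul_choose_eq m i
    have := congrArg (fun n : ℕ => (n : ℝ)) h
    push_cast at this
    linarith
  rw [Nat.succ_sub_succ]
  push_cast
  linear_combination (q ^ (m - i) * p ^ (i + 1) * f (i + 1)) * hc

lemma term_le (s : ℝ) (hs : 0 < s) (i : ℕ) :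
    1 / (1 + (i : ℝ) * s) ≤ (1 + s) * (1 / (1 + ((i : ℝ) + 1) * s)) := by
  have h1 : (0 : ℝ) < 1 + (i : ℝ) * s := by positivity
  have h2 : (0 : ℝ) < 1 + ((i : ℝ) + 1) * s := by positivity
  rw [mul_one_div, div_le_div_iff₀ h1 h2]
  nlinarith [mul_nonneg (mul_nonneg (Nat.cast_nonneg i : (0:ℝ) ≤ i) hs.le) hs.le]

lemma term_lt (s : ℝ) (hs : 0 < s) (i : ℕ) (hi : 1 ≤ i) :
    1 / (1 + (i : ℝ) * s) < (1 + s) * (1 / (1 + ((i : ℝ) + 1) * s)) := by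
  have h1 : (0 : ℝ) < 1 + (i : ℝ) * s := by positivity
  have h2 : (0 : ℝ) < 1 + ((i : ℝ) + 1) * s := by positivity
  have hi' : (1 : ℝ) ≤ (i : ℝ) := by exact_mod_cast hi
  rw [mul_one_div, div_lt_div_iff₀ h1 h2]
  nlinarith [mul_pos hs hs]

lemma Bw_f_le (p q s : ℝ) (hp : 0 ≤ p) (hq : 0 ≤ q) (hs : 0 < s) (m : ℕ) :
    Bw p q m (fun i => 1 / (1 + (i : ℝ) * s))
      ≤ (1 + s) * Bw p q m (fun i => 1 / (1 + ((i : ℝ) + 1) * s)) := by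
  rw [Bw, Bw, Finset.mul_sum]
  refine Finset.sum_le_sum fun i _ => ?_
  have hw : (0 : ℝ) ≤ (m.choose i : ℝ) * q ^ (m - i) * p ^ i := by positivity
  refine le_trans (mul_le_mul_of_nonneg_left (term_le s hs i) hw) (le_of_eq (by ring))

lemma Bw_f_lt (p q s : ℝ) (hp : 0 < p) (hq : 0 ≤ q) (hs : 0 < s) (m : ℕ) (hm : 1 ≤ m) :
    Bw p q m (fun i => 1 / (1 + (i : ℝ) * s))
      < (1 + s) * Bw p q m (fun i => 1 / (1 + ((i : ℝ) + 1) * s)) := by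
  rw [Bw, Bw, Finset.mul_sum]
  refine Finset.sum_lt_sum (fun i _ => ?_) ⟨m, Finset.self_mem_range_succ m, ?_⟩
  · have hw : (0 : ℝ) ≤ (m.choose i : ℝ) * q ^ (m - i) * p ^ i := by positivity
    refine le_trans (mul_le_mul_of_nonneg_left (term_le s hs i) hw) (le_of_eq (by ring))
  · have hw : (0 : ℝ) < (m.choose m : ℝ) * q ^ (m - m) * p ^ m := by
      simp [Nat.choose_self]
      positivity
    refine lt_of_lt_of_le (mul_lt_mul_of_pos_left (term_lt s hs m hm) hw) (le_of_eq (by ring))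

lemma key_id (p q s : ℝ) (hs : 0 < s) (hpq : p + q = 1) (m : ℕ) :
    ((1 + q * s) + ((m : ℝ) + 1) * p * s) * Bw p q (m + 1) (fun i => 1 / (1 + (i : ℝ) * s))
      - (1 + q * s)
    = s * (((m : ℝ) + 1) * p) * q *
        (Bw p q m (fun i => 1 / (1 + (i : ℝ) * s))
          - (1 + s) * Bw p q m (fun i => 1 / (1 + ((i : ℝ) + 1) * s))) := by
  set f : ℕ → ℝ := fun i => 1 / (1 + (i : ℝ) * s) with hf
  have hTg : Bw p q m (fun i => f (i + 1))
      = Bw p q m (fun i => 1 / (1 + ((i : ℝ) + 1) * s)) := by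
    refine Bw_congr _ _ _ _ _ fun i => ?_
    simp only [hf]
    push_cast
    ring_nf
  set A : ℝ := 1 + q * s with hA
  set c₁ : ℝ := s * ((m : ℝ) + 1) * p with hc1
  have e1 : ∀ i : ℕ, (A + ((m : ℝ) + 1) * p * s) * f i + (-A) * 1
      = c₁ * f i + (-(s * A)) * ((i : ℝ) * f i) := by
    intro i
    have hne : (1 + (i : ℝ) * s) ≠ 0 := by positivity
    simp only [hf, hc1]
    field_simp
    ring
  have step1 : (A + ((m : ℝ) + 1) * p * s) * Bw p q (m + 1) f - A
      = c₁ * Bw p q (m + 1) f + (-(s * A)) * Bw p q (m + 1) (fun i => (i : ℝ) * f i) := by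
    calc (A + ((m : ℝ) + 1) * p * s) * Bw p q (m + 1) f - A
        = (A + ((m : ℝ) + 1) * p * s) * Bw p q (m + 1) f
            + (-A) * Bw p q (m + 1) (fun _ => 1) := by
          rw [Bw_one p q hpq]; ring
      _ = Bw p q (m + 1) (fun i => (A + ((m : ℝ) + 1) * p * s) * f i + (-A) * 1) := by
          rw [Bw_lin]
      _ = Bw p q (m + 1) (fun i => c₁ * f i + (-(s * A)) * ((i : ℝ) * f i)) :=
          Bw_congr _ _ _ _ _ e1
      _ = c₁ * Bw p q (m + 1) f + (-(s * A)) * Bw p q (m + 1) (fun i => (i : ℝ) * f i) := by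
          rw [Bw_lin]
  rw [step1, Bw_succ p q m f, Bw_moment p q m f, hTg]
  set Sm := Bw p q m f
  set Tm := Bw p q m (fun i => 1 / (1 + ((i : ℝ) + 1) * s))
  simp only [hc1, hA]
  linear_combination (s * ((m : ℝ) + 1) * p * Tm) * hpq

lemma main_le (p q s : ℝ) (hp : 0 < p) (hq : 0 ≤ q) (hpq : p + q = 1) (hs : 0 < s) (m : ℕ) :
    ((1 + q * s) + ((m : ℝ) + 1) * p * s)
        * Bw p q (m + 1) (fun i => 1 / (1 + (i : ℝ) * s)) ≤ 1 + q * s := by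
  have hkey := key_id p q s hs hpq m
  have hle := Bw_f_le p q s hp.le hq hs m
  have hfac : (0 : ℝ) ≤ s * (((m : ℝ) + 1) * p) * q := by positivity
  nlinarith [mul_nonneg hfac (sub_nonneg.mpr hle)]

lemma main_lt (p q s : ℝ) (hp : 0 < p) (hq : 0 < q) (hpq : p + q = 1) (hs : 0 < s)
    (m : ℕ) (hm : 1 ≤ m) :
    ((1 + q * s) + ((m : ℝ) + 1) * p * s)
        * Bw p q (m + 1) (fun i => 1 / (1 + (i : ℝ) * s)) < 1 + q * s := by
  have hkey := key_id p q s hs hpq m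
  have hlt := Bw_f_lt p q s hp hq.le hs m hm
  have hfac : (0 : ℝ) < s * (((m : ℝ) + 1) * p) * q := by positivity
  nlinarith [mul_pos hfac (sub_pos.mpr (by linarith : Bw p q m (fun i => 1 / (1 + (i : ℝ) * s)) < (1 + s) * Bw p q m (fun i => 1 / (1 + ((i : ℝ) + 1) * s))))]



/-- With `γ = 1`,
`P_r^{drop} = Σ_{i=0}^r C(r,i)(ω/(β+ω))^{r-i}(β/(β+ω))^i/(1+i(β+ω))` and
`P_r^{mod} = (1+ω)/(1+ω+rβ)` satisfy `P_r^{drop} ≤ P_r^{mod}` for all `r`,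
with equality for `r = 0, 1` and strict inequality for `r ≥ 2` when `ω > 0`. -/
theorem stmt_10 (β ω : ℝ) (hβ : 0 < β) (hω : 0 ≤ ω)
    (Pdrop Pmod : ℕ → ℝ)
    (hd : ∀ r : ℕ, Pdrop r = ∑ i ∈ Finset.range (r + 1),
      (r.choose i : ℝ) * (ω / (β + ω)) ^ (r - i) * (β / (β + ω)) ^ i *
        (1 / (1 + (i : ℝ) * (β + ω))))
    (hm : ∀ r : ℕ, Pmod r = (1 + ω) / (1 + ω + (r : ℝ) * β)) :
    (∀ r : ℕ, Pdrop r ≤ Pmod r) ∧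
    Pdrop 0 = Pmod 0 ∧ Pdrop 1 = Pmod 1 ∧
    (0 < ω → ∀ r : ℕ, 2 ≤ r → Pdrop r < Pmod r) := by
  have hs : (0 : ℝ) < β + ω := by linarith
  set s : ℝ := β + ω with hsdef
  set p : ℝ := β / s with hpdef
  set q : ℝ := ω / s with hqdef
  have hp : 0 < p := div_pos hβ hs
  have hq : 0 ≤ q := div_nonneg hω hs.le
  have hpq : p + q = 1 := by
    rw [hpdef, hqdef, ← add_div, div_self hs.ne']
  have hqs : q * s = ω := div_mul_cancel₀ ω hs.ne'
  have hps : p * s = β := div_mul_cancel₀ β hs.ne'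
  have hdB : ∀ r : ℕ, Pdrop r = Bw p q r (fun i => 1 / (1 + (i : ℝ) * s)) := by
    intro r
    rw [hd r]; rfl
  have hmB : ∀ m : ℕ, Pmod (m + 1)
      = (1 + q * s) / ((1 + q * s) + ((m : ℝ) + 1) * p * s) := by
    intro m
    rw [hm (m + 1), hqs, mul_assoc, hps]
    push_cast
    ring_nf
  have hpos : ∀ m : ℕ, (0 : ℝ) < (1 + q * s) + ((m : ℝ) + 1) * p * s := by
    intro m
    have h1 : (0 : ℝ) ≤ q * s := mul_nonneg hq hs.le
    have h2 : (0 : ℝ) < ((m : ℝ) + 1) * (p * s) :=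
      mul_pos (by have := Nat.cast_nonneg (α := ℝ) m; linarith) (mul_pos hp hs)
    nlinarith
  have hle : ∀ r : ℕ, Pdrop r ≤ Pmod r := by
    intro r
    match r with
    | 0 =>
      rw [hd 0, hm 0]
      simp [div_self (show (1:ℝ) + ω ≠ 0 by positivity)]
    | (m + 1) =>
      rw [hdB (m + 1), hmB m, le_div_iff₀ (hpos m), mul_comm]
      exact main_le p q s hp hq hpq hs m
  refine ⟨hle, ?_, ?_, ?_⟩
  · rw [hd 0, hm 0]
    simp [div_self (show (1:ℝ) + ω ≠ 0 by positivity)]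
  · rw [hd 1, hm 1]
    simp [Finset.sum_range_succ]
    have h1 : (1 : ℝ) + s ≠ 0 := by positivity
    have h2 : (1 : ℝ) + ω + β ≠ 0 := by positivity
    rw [hpdef, hqdef]
    field_simp
    ring
  · intro hω' r hr
    have hq' : 0 < q := div_pos hω' hs
    obtain ⟨k, rfl⟩ : ∃ k, r = (k + 1) + 1 := ⟨r - 2, by omega⟩
    rw [hdB (k + 1 + 1), hmB (k + 1), lt_div_iff₀ (hpos (k + 1)), mul_comm]
    exact main_lt p q s hp hq' hpq hs (k + 1) (by omega)
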